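/- Let $k \geq 2$, let $G$ be a graph, and let $S$, $W_0$, $V_1$ be pairwise disjoint vertex sets such that every $w \in W_0$ has at least $k^2$ neighbors in $S$. For $v \in V_1$ let $W_0(v) = \{w \in W_0 : \{w,v\} \in E(G)\}$. If $|W_0(v)| > (k-1)|S|$ for some $v \in V_1$, then $G$ contains a cycle of length $2k$ that intersects $S$. -/

import Mathlib

open Finset

lemma mul_pred_add {a b : ℕ} (hb : 1 ≤ b) : a * (b - 1) + a = a * b := by
  obtain ⟨m, rfl⟩ := Nat.exists_eq_add_of_le hb
  simp [Nat.mul_succ, Nat.mul_add, Nat.add_comm]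

lemma cleanLemma {V : Type*} [DecidableEq V]
    (G : SimpleGraph V) [DecidableRel G.Adj]
    (k : ℕ) (hk : 2 ≤ k) (S : Finset V)
    (n : ℕ) :
    ∀ (A B : Finset V), A.card + B.card ≤ n → B ⊆ S →
    (∀ w ∈ A, k ^ 2 ≤ (S.filter (fun s => G.Adj w s)).card) →
    (k - 1) * B.card + (∑ w ∈ A, ((S \ B).filter (fun s => G.Adj w s)).card)
        < (k ^ 2 - k + 2) * A.card →
    ∃ A' B', A' ⊆ A ∧ B' ⊆ B ∧ A'.Nonempty ∧
      (∀ w ∈ A', k - 1 ≤ (B'.filter (fun s => G.Adj w s)).card) ∧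
      (∀ s ∈ B', k ≤ (A'.filter (fun w => G.Adj w s)).card) := by
  induction n with
  | zero =>
    intro A B hn hBS hdeg hlt
    have hA : A = ∅ := card_eq_zero.mp (by omega)
    rw [hA] at hlt
    simp at hlt
  | succ n ih =>
    intro A B hn hBS hdeg hlt
    by_cases hcaseS : ∃ s ∈ B, (A.filter (fun w => G.Adj w s)).card ≤ k - 1
    · obtain ⟨s, hsB, hs⟩ := hcaseS
      have hBpos : 1 ≤ B.card := card_pos.mpr ⟨s, hsB⟩
      have hce : (B.erase s).card = B.card - 1 := card_erase_of_mem hsB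
      refine (ih A (B.erase s) (by omega) ((erase_subset _ _).trans hBS) hdeg ?_).imp
        fun A' h => h.imp fun B' h => ⟨h.1, (h.2.1.trans (erase_subset _ _)), h.2.2⟩
      have hss : s ∈ S := hBS hsB
      have hrw : S \ (B.erase s) = insert s (S \ B) := by
        ext x
        simp only [mem_sdiff, mem_erase, mem_insert]
        constructor
        · rintro ⟨hxS, hx⟩
          by_cases hxs : x = s
          · exact Or.inl hxs
          · exact Or.inr ⟨hxS, fun hb => hx ⟨hxs, hb⟩⟩
        · rintro (rfl | ⟨hxS, hxB⟩)
          · exact ⟨hss, fun h => h.1 rfl⟩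
          · exact ⟨hxS, fun h => hxB h.2⟩
      have hsnot : s ∉ S \ B := by simp [hsB]
      have hsum : ∀ w ∈ A, ((insert s (S \ B)).filter (fun t => G.Adj w t)).card
          = ((S \ B).filter (fun t => G.Adj w t)).card + (if G.Adj w s then 1 else 0) := by
        intro w _
        rw [filter_insert]
        split_ifs with h
        · rw [card_insert_of_notMem (by simp [hsnot])]
        · rfl
      rw [hrw, Finset.sum_congr rfl hsum, Finset.sum_add_distrib]
      have hcf : (∑ w ∈ A, if G.Adj w s then 1 else 0) = (A.filter (fun w => G.Adj w s)).card := by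
        rw [Finset.card_filter]
      rw [hcf, hce]
      have hmul := mul_pred_add (a := k - 1) hBpos
      omega
    · push_neg at hcaseS
      by_cases hcaseW : ∃ w ∈ A, (B.filter (fun s => G.Adj w s)).card ≤ k - 2
      · obtain ⟨w, hwA, hw⟩ := hcaseW
        have hApos : 1 ≤ A.card := card_pos.mpr ⟨w, hwA⟩
        have hce : (A.erase w).card = A.card - 1 := card_erase_of_mem hwA
        refine (ih (A.erase w) B (by omega) hBS (fun x hx => hdeg x (erase_subset _ _ hx)) ?_).imp
          fun A' h => h.imp fun B' h => ⟨h.1.trans (erase_subset _ _), h.2⟩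
        have hsplit : (S.filter (fun s => G.Adj w s)).card
            = (B.filter (fun s => G.Adj w s)).card + ((S \ B).filter (fun s => G.Adj w s)).card := by
          rw [← card_union_of_disjoint, ← filter_union]
          · congr 2
            rw [union_sdiff_of_subset hBS]
          · exact disjoint_filter_filter (disjoint_sdiff)
        have hdw := hdeg w hwA
        have hsum := Finset.sum_erase_add A (fun w => ((S \ B).filter (fun s => G.Adj w s)).card) hwA
        have hmul := mul_pred_add (a := k ^ 2 - k + 2) hApos
        have hk2 : k + 2 ≤ k ^ 2 := by nlinarith
        rw [hce]
        omega
      · push_neg at hcaseW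
        have hApos : A.Nonempty := by
          rw [← card_pos]
          rcases Nat.eq_zero_or_pos A.card with h | h
          · rw [card_eq_zero] at h
            rw [h] at hlt
            simp at hlt
          · exact h
        exact ⟨A, B, subset_rfl, subset_rfl, hApos, fun w hw => by have := hcaseW w hw; omega,
          fun s hs => by have := hcaseS s hs; omega⟩

open Finset

lemma pathLemma {V : Type*} [DecidableEq V]
    (G : SimpleGraph V) [DecidableRel G.Adj]
    (k : ℕ) (hk : 2 ≤ k) (A B : Finset V) (hAB : Disjoint A B)
    (hA : ∀ w ∈ A, k - 1 ≤ (B.filter (fun s => G.Adj w s)).card)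
    (hB : ∀ s ∈ B, k ≤ (A.filter (fun w => G.Adj w s)).card)
    (x : V) (hx : x ∈ A) :
    ∀ n, 1 ≤ n → n ≤ k →
    ∃ (y : V) (p : G.Walk x y), p.IsPath ∧ p.length = 2 * n - 2 ∧ y ∈ A ∧
      (∀ z ∈ p.support, z ∈ A ∪ B) ∧
      (p.support.toFinset ∩ A).card ≤ n ∧ (p.support.toFinset ∩ B).card ≤ n - 1 ∧
      (2 ≤ n → ∃ s ∈ B, s ∈ p.support) := by
  intro n
  induction n with
  | zero => omega
  | succ m ih =>
    intro h1 hle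
    rcases Nat.eq_zero_or_pos m with rfl | hm
    · -- base case n = 1 : nil walk
      refine ⟨x, SimpleGraph.Walk.nil, SimpleGraph.Walk.IsPath.nil, by simp, hx, ?_, ?_, ?_, by omega⟩
      · intro z hz
        simp only [SimpleGraph.Walk.support_nil, List.mem_singleton] at hz
        subst hz
        exact mem_union_left _ hx
      · simp only [SimpleGraph.Walk.support_nil, List.toFinset_cons, List.toFinset_nil,
          insert_empty_eq]
        calc ({x} ∩ A).card ≤ ({x} : Finset V).card := card_le_card inter_subset_left
          _ ≤ 0 + 1 := by simp
      · simp only [SimpleGraph.Walk.support_nil, List.toFinset_cons, List.toFinset_nil,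
          insert_empty_eq]
        rw [singleton_inter_of_notMem (fun hxB => (hAB.forall_ne_finset hx hxB) rfl)]
        simp
    · -- inductive step : extend path from m to m+1
      obtain ⟨y, p, hpath, hlen, hyA, hsupp, hcA, hcB, _⟩ := ih hm (by omega)
      -- choose s ∈ B adjacent to y, not in p.support
      have hfB : m - 1 < (B.filter (fun s => G.Adj y s)).card := by
        have := hA y hyA
        omega
      obtain ⟨s, hsf, hsnew⟩ : ∃ s ∈ B.filter (fun s => G.Adj y s), s ∉ p.support := by
        by_contra hcon
        push_neg at hcon
        have hsub : B.filter (fun s => G.Adj y s) ⊆ p.support.toFinset ∩ B := by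
          intro z hz
          rw [mem_inter, List.mem_toFinset]
          exact ⟨hcon z hz, (mem_filter.mp hz).1⟩
        have := card_le_card hsub
        omega
      have hsB : s ∈ B := (mem_filter.mp hsf).1
      have hadjys : G.Adj y s := (mem_filter.mp hsf).2
      -- choose w ∈ A adjacent to s, not in p.support
      have hfA : m < (A.filter (fun w => G.Adj w s)).card := by
        have := hB s hsB
        omega
      obtain ⟨w, hwf, hwnew⟩ : ∃ w ∈ A.filter (fun w => G.Adj w s), w ∉ p.support := by
        by_contra hcon
        push_neg at hcon
        have hsub : A.filter (fun w => G.Adj w s) ⊆ p.support.toFinset ∩ A := by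
          intro z hz
          rw [mem_inter, List.mem_toFinset]
          exact ⟨hcon z hz, (mem_filter.mp hz).1⟩
        have := card_le_card hsub
        omega
      have hwA : w ∈ A := (mem_filter.mp hwf).1
      have hadjsw : G.Adj s w := ((mem_filter.mp hwf).2).symm
      have hws : w ≠ s := hAB.forall_ne_finset hwA hsB
      -- build the new walk
      refine ⟨w, (p.concat hadjys).concat hadjsw, ?_, ?_, hwA, ?_, ?_, ?_, ?_⟩
      · -- IsPath
        rw [SimpleGraph.Walk.isPath_def, SimpleGraph.Walk.support_concat,
          SimpleGraph.Walk.support_concat]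
        rw [← List.concat_eq_append, ← List.concat_eq_append]
        refine List.Nodup.concat ?_ (List.Nodup.concat hsnew hpath.support_nodup)
        intro hcon
        simp only [List.concat_eq_append, List.mem_append, List.mem_singleton] at hcon
        rcases hcon with h | h
        · exact hwnew h
        · exact hws h
      · -- length
        rw [SimpleGraph.Walk.length_concat, SimpleGraph.Walk.length_concat]
        omega
      · -- support in A ∪ B
        intro z hz
        rw [SimpleGraph.Walk.support_concat, SimpleGraph.Walk.support_concat] at hz
        simp only [List.concat_eq_append, List.mem_append, List.mem_singleton] at hz
        rcases hz with (hz | rfl) | rfl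
        · exact hsupp z hz
        · exact mem_union_right _ hsB
        · exact mem_union_left _ hwA
      · -- count A
        rw [SimpleGraph.Walk.support_concat, SimpleGraph.Walk.support_concat]
        simp only [List.concat_eq_append, List.toFinset_append, List.toFinset_cons,
          List.toFinset_nil, insert_empty_eq]
        have hsub : (p.support.toFinset ∪ {s} ∪ {w}) ∩ A ⊆ insert w (p.support.toFinset ∩ A) := by
          intro z hz
          rw [mem_inter, union_assoc, mem_union] at hz
          rcases hz with ⟨hz1 | hz2, hzA⟩
          · exact mem_insert_of_mem (mem_inter.mpr ⟨hz1, hzA⟩)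
          · rw [mem_union, mem_singleton, mem_singleton] at hz2
            rcases hz2 with rfl | rfl
            · exact absurd hzA (hAB.forall_ne_finset · hsB rfl)
            · exact mem_insert_self _ _
        refine le_trans (card_le_card hsub) (le_trans (card_insert_le _ _) ?_)
        omega
      · -- count B
        rw [SimpleGraph.Walk.support_concat, SimpleGraph.Walk.support_concat]
        simp only [List.concat_eq_append, List.toFinset_append, List.toFinset_cons,
          List.toFinset_nil, insert_empty_eq]
        have hsub : (p.support.toFinset ∪ {s} ∪ {w}) ∩ B ⊆ insert s (p.support.toFinset ∩ B) := by
          intro z hz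
          rw [mem_inter, union_assoc, mem_union] at hz
          rcases hz with ⟨hz1 | hz2, hzB⟩
          · exact mem_insert_of_mem (mem_inter.mpr ⟨hz1, hzB⟩)
          · rw [mem_union, mem_singleton, mem_singleton] at hz2
            rcases hz2 with rfl | rfl
            · exact mem_insert_self _ _
            · exact absurd hzB (hAB.forall_ne_finset hwA · rfl)
        refine le_trans (card_le_card hsub) (le_trans (card_insert_le _ _) ?_)
        omega
      · -- contains an s ∈ B
        intro _
        refine ⟨s, hsB, ?_⟩
        rw [SimpleGraph.Walk.support_concat, SimpleGraph.Walk.support_concat]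
        simp
theorem stmt3 {V : Type*} [Fintype V] [DecidableEq V]
    (G : SimpleGraph V) [DecidableRel G.Adj]
    (k : ℕ) (hk : 2 ≤ k) (S W0 V1 : Finset V)
    (hS : S.Nonempty) (hW0 : W0.Nonempty) (hV1 : V1.Nonempty)
    (h1 : Disjoint S W0) (h2 : Disjoint S V1) (h3 : Disjoint W0 V1)
    (hdeg : ∀ w ∈ W0, k ^ 2 ≤ (S.filter (fun s => G.Adj w s)).card)
    (hbig : ∃ v ∈ V1, (k - 1) * S.card < (W0.filter (fun w => G.Adj w v)).card) :
    ∃ (x : V) (c : G.Walk x x), c.IsCycle ∧ c.length = 2 * k ∧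
      ∃ s ∈ S, s ∈ c.support := by
  classical
  obtain ⟨v, hvV1, hbig⟩ := hbig
  set Wv : Finset V := W0.filter (fun w => G.Adj w v) with hWv
  have hWvW0 : Wv ⊆ W0 := filter_subset _ _
  -- clean the bipartite graph between Wv and S
  obtain ⟨A', B', hA'sub, hB'sub, hA'ne, hdA, hdB⟩ :=
    cleanLemma G k hk S (Wv.card + S.card) Wv S le_rfl subset_rfl
      (fun w hw => hdeg w (hWvW0 hw))
      (by
        have hz : (∑ w ∈ Wv, ((S \ S).filter (fun s => G.Adj w s)).card) = 0 := by
          simp [sdiff_self]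
        rw [hz]
        have hpos : 0 < k ^ 2 - k + 2 := by omega
        calc (k - 1) * S.card + 0 = (k - 1) * S.card := by omega
          _ < Wv.card := hbig
          _ ≤ (k ^ 2 - k + 2) * Wv.card := Nat.le_mul_of_pos_left _ hpos)
  have hA'W0 : A' ⊆ W0 := hA'sub.trans hWvW0
  have hAB : Disjoint A' B' := by
    rw [Finset.disjoint_left]
    intro a haA haB
    exact (h1.forall_ne_finset (hB'sub haB) (hA'W0 haA)) rfl
  obtain ⟨x, hxA⟩ := hA'ne
  -- build the alternating path of length 2k - 2
  obtain ⟨y, p, hpath, hlen, hyA, hsupp, _, _, hsS⟩ :=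
    pathLemma G k hk A' B' hAB hdA hdB x hxA k (by omega) le_rfl
  obtain ⟨s, hsB', hsmem⟩ := hsS hk
  -- basic facts
  have hlen2 : p.length = 2 * k - 2 := hlen
  have hxy : x ≠ y := by
    intro h
    subst h
    rw [SimpleGraph.Walk.isPath_iff_eq_nil] at hpath
    rw [hpath] at hlen2
    simp at hlen2
    omega
  have hvnot : v ∉ p.support := by
    intro hcon
    rcases mem_union.mp (hsupp v hcon) with h | h
    · exact (h3.forall_ne_finset (hA'W0 h) hvV1) rfl
    · exact (h2.forall_ne_finset (hB'sub h) hvV1) rfl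
  have hadjxv : G.Adj x v := (mem_filter.mp (hA'sub hxA)).2
  have hadjyv : G.Adj y v := (mem_filter.mp (hA'sub hyA)).2
  -- close the cycle through v
  let q : G.Walk x v := p.concat hadjyv
  have hqpath : q.IsPath := by
    rw [SimpleGraph.Walk.isPath_def, SimpleGraph.Walk.support_concat]
    rw [← List.concat_eq_append]
    exact List.Nodup.concat hvnot hpath.support_nodup
  refine ⟨v, SimpleGraph.Walk.cons hadjxv.symm q, ?_, ?_, s, hB'sub hsB', ?_⟩
  · rw [SimpleGraph.Walk.cons_isCycle_iff]
    refine ⟨hqpath, ?_⟩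
    intro hcon
    have hqe : q.edges = p.edges.concat s(y, v) := SimpleGraph.Walk.edges_concat p hadjyv
    rw [hqe] at hcon
    simp only [List.concat_eq_append, List.mem_append, List.mem_singleton] at hcon
    rcases hcon with h | h
    · exact hvnot (p.fst_mem_support_of_mem_edges h)
    · rw [Sym2.eq_iff] at h
      rcases h with ⟨hvy, hxv⟩ | ⟨_, hxy'⟩
      · exact (h3.forall_ne_finset (hA'W0 hyA) hvV1) hvy.symm
      · exact hxy hxy'
  · rw [SimpleGraph.Walk.length_cons, SimpleGraph.Walk.length_concat, hlen2]
    omega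
  · rw [SimpleGraph.Walk.support_cons]
    right
    show s ∈ q.support
    rw [SimpleGraph.Walk.support_concat]
    simp only [List.concat_eq_append, List.mem_append, List.mem_singleton]
    exact Or.inl hsmem
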